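/- If two extreme sets X and Y cross (i.e., X∩Y, X\Y, and Y\X are all nonempty), then at least one of X\Y or Y\X contains no terminal. -/
import Mathlib

variable {V : Type*}

def IsSteinerCut (T X : Set V) : Prop := (X ∩ T).Nonempty ∧ ¬ T ⊆ X

def SteinerExtreme (d : Set V → ℝ) (T X : Set V) : Prop :=
  IsSteinerCut T X ∧ ∀ Y, IsSteinerCut T Y → Y ⊂ X → d X < d Y

def Crosses (X Y : Set V) : Prop :=
  (X ∩ Y).Nonempty ∧ (X \ Y).Nonempty ∧ (Y \ X).Nonempty

/-- If two extreme sets cross, then at least one of `X \ Y` or `Y \ X`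
contains no terminal. -/
theorem extreme_cross_difference_no_terminal [Fintype V] (d : Set V → ℝ) (T X Y : Set V)
    (hpos : ∀ A B : Set V, d (A \ B) + d (B \ A) ≤ d A + d B)
    (hX : SteinerExtreme d T X) (hY : SteinerExtreme d T Y) (hc : Crosses X Y) :
    (X \ Y) ∩ T = ∅ ∨ (Y \ X) ∩ T = ∅ := by
  by_contra h
  push_neg at h
  obtain ⟨h1, h2⟩ := h
  obtain ⟨a, ha⟩ := h1
  obtain ⟨b, hb⟩ := h2
  obtain ⟨c, hc1, hc2⟩ := hc.1
  have hXY : IsSteinerCut T (X \ Y) :=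
    ⟨⟨a, ha⟩, fun hT => (hT hb.2).2 hb.1.1⟩
  have hYX : IsSteinerCut T (Y \ X) :=
    ⟨⟨b, hb⟩, fun hT => (hT ha.2).2 ha.1.1⟩
  have hssX : X \ Y ⊂ X := ⟨Set.diff_subset, fun hs => ((hs hc1).2 hc2)⟩
  have hssY : Y \ X ⊂ Y := ⟨Set.diff_subset, fun hs => ((hs hc2).2 hc1)⟩
  have l1 := hX.2 _ hXY hssX
  have l2 := hY.2 _ hYX hssY
  have := hpos X Y
  linarith
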